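/- Let λ₁,…,λₙ be distinct elements of a field of characteristic zero and k < n. Then ∑_{I⊂[n], |I|=k} 1/∏_{i∈I}∏_{j∈Iᶜ}(λ_i−λ_j) = 0 when k(n−k) > 0, i.e., the sum over all k-subsets of the reciprocal of the product of differences vanishes whenever 0 < k < n and n ≥ 2. -/

import Mathlib

open Finset

section Aux

open Polynomial

variable {F : Type*} [Field F]

private lemma lag_coeff_basis {n : ℕ} (lam : Fin n → F)
    (hlam : Function.Injective lam) (i : Fin n) :
    (Lagrange.basis univ lam i).coeff (n - 1) = ∏ j ∈ univ.erase i, (lam i - lam j)⁻¹ := by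
  have hvs : Set.InjOn lam (univ : Finset (Fin n)) := hlam.injOn
  have hnd : (Lagrange.basis univ lam i).natDegree = n - 1 := by
    rw [Lagrange.natDegree_basis hvs (mem_univ i), card_univ, Fintype.card_fin]
  rw [← hnd, Polynomial.coeff_natDegree]
  unfold Lagrange.basis
  rw [Polynomial.leadingCoeff_prod]
  refine Finset.prod_congr rfl fun j hj => ?_
  unfold Lagrange.basisDivisor
  rw [leadingCoeff_mul, leadingCoeff_C, (monic_X_sub_C _).leadingCoeff, mul_one]

private lemma lag_pow_sum {n : ℕ} (lam : Fin n → F)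
    (hlam : Function.Injective lam) (m : ℕ) (hm : m + 1 < n) :
    ∑ j, (∏ i ∈ univ.erase j, (lam j - lam i)⁻¹) * lam j ^ m = 0 := by
  have hvs : Set.InjOn lam (univ : Finset (Fin n)) := hlam.injOn
  have hdeg : ((X : F[X]) ^ m).degree < (univ : Finset (Fin n)).card := by
    rw [degree_X_pow, card_univ, Fintype.card_fin]
    exact_mod_cast lt_of_le_of_lt (Nat.le_succ m) hm
  have hint : (X : F[X]) ^ m = Lagrange.interpolate univ lam (fun i => lam i ^ m) :=
    Lagrange.eq_interpolate_of_eval_eq (r := fun i => lam i ^ m) hvs hdeg (fun i _ => by simp)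
  have h0 : ((X : F[X]) ^ m).coeff (n - 1) = 0 := by
    rw [coeff_X_pow, if_neg (by omega)]
  rw [hint] at h0
  rw [Lagrange.interpolate_apply, Polynomial.finset_sum_coeff] at h0
  simp only [Polynomial.coeff_C_mul] at h0
  rw [← h0]
  refine Finset.sum_congr rfl fun j _ => ?_
  rw [lag_coeff_basis lam hlam j, mul_comm]

private lemma det_sq_expand {k : ℕ} (v : Fin k → F) :
    (∏ a : Fin k, ∏ b ∈ Ioi a, (v b - v a)) =
      ∑ σ : Equiv.Perm (Fin k), (Equiv.Perm.sign σ : ℤ) * ∏ i, v (σ i) ^ (i : ℕ) := by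
  rw [← Matrix.det_vandermonde, Matrix.det_apply']
  simp [Matrix.vandermonde_apply]

private lemma fn_sum_zero {n k : ℕ} (hk0 : 0 < k) (hk : k < n) (lam : Fin n → F)
    (w : Fin n → F)
    (hw : ∀ m : ℕ, m + 1 < n → ∑ j, w j * lam j ^ m = 0) :
    ∑ g : Fin k → Fin n,
      (∏ a, w (g a)) * ((∏ a : Fin k, ∏ b ∈ Ioi a, (lam (g b) - lam (g a))) *
        (∏ a : Fin k, ∏ b ∈ Ioi a, (lam (g b) - lam (g a)))) = 0 := by
  have key : ∀ (σ τ : Equiv.Perm (Fin k)),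
      ∑ g : Fin k → Fin n, ∏ a : Fin k,
        (w (g a) * (lam (g a) ^ ((σ.symm a : Fin k) : ℕ) *
          lam (g a) ^ ((τ.symm a : Fin k) : ℕ))) = 0 := by
    intro σ τ
    have := Finset.sum_prod_piFinset (κ := Fin n) (ι := Fin k) (R := F) univ
      (fun a j => w j * (lam j ^ ((σ.symm a : Fin k) : ℕ) * lam j ^ ((τ.symm a : Fin k) : ℕ)))
    rw [Fintype.piFinset_univ] at this
    rw [this]
    apply Finset.prod_eq_zero (Finset.mem_univ (σ ⟨0, hk0⟩))
    simp only [Equiv.symm_apply_apply, ← pow_add]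
    have hlt : ((⟨0, hk0⟩ : Fin k) : ℕ) + (τ.symm (σ ⟨0, hk0⟩) : ℕ) + 1 < n := by
      have := (τ.symm (σ ⟨0, hk0⟩)).isLt
      simp only [Fin.val_mk, zero_add]
      omega
    exact hw _ hlt
  calc ∑ g : Fin k → Fin n,
      (∏ a, w (g a)) * ((∏ a : Fin k, ∏ b ∈ Ioi a, (lam (g b) - lam (g a))) *
        (∏ a : Fin k, ∏ b ∈ Ioi a, (lam (g b) - lam (g a))))
      = ∑ σ : Equiv.Perm (Fin k), ∑ τ : Equiv.Perm (Fin k),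
          ((Equiv.Perm.sign σ : ℤ) * (Equiv.Perm.sign τ : ℤ) : ℤ) *
          ∑ g : Fin k → Fin n, ∏ a : Fin k,
            (w (g a) * (lam (g a) ^ ((σ.symm a : Fin k) : ℕ) *
              lam (g a) ^ ((τ.symm a : Fin k) : ℕ))) := by
        have expand : ∀ g : Fin k → Fin n,
            (∏ a, w (g a)) * ((∏ a : Fin k, ∏ b ∈ Ioi a, (lam (g b) - lam (g a))) *
              (∏ a : Fin k, ∏ b ∈ Ioi a, (lam (g b) - lam (g a)))) =
            ∑ σ : Equiv.Perm (Fin k), ∑ τ : Equiv.Perm (Fin k),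
              ((Equiv.Perm.sign σ : ℤ) * (Equiv.Perm.sign τ : ℤ) : ℤ) *
              ∏ a : Fin k,
                (w (g a) * (lam (g a) ^ ((σ.symm a : Fin k) : ℕ) *
                  lam (g a) ^ ((τ.symm a : Fin k) : ℕ))) := by
          intro g
          rw [det_sq_expand (fun b => lam (g b)), Finset.sum_mul_sum, Finset.mul_sum]
          refine Finset.sum_congr rfl fun σ _ => ?_
          rw [Finset.mul_sum]
          refine Finset.sum_congr rfl fun τ _ => ?_
          have hσ : (∏ i : Fin k, lam (g (σ i)) ^ (i : ℕ)) =
              ∏ a : Fin k, lam (g a) ^ ((σ.symm a : Fin k) : ℕ) := by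
            rw [← Equiv.prod_comp σ (fun a => lam (g a) ^ ((σ.symm a : Fin k) : ℕ))]
            simp
          have hτ : (∏ i : Fin k, lam (g (τ i)) ^ (i : ℕ)) =
              ∏ a : Fin k, lam (g a) ^ ((τ.symm a : Fin k) : ℕ) := by
            rw [← Equiv.prod_comp τ (fun a => lam (g a) ^ ((τ.symm a : Fin k) : ℕ))]
            simp
          rw [hσ, hτ]
          simp only [Finset.prod_mul_distrib]
          push_cast
          ring
        simp only [expand]
        rw [Finset.sum_comm]
        refine Finset.sum_congr rfl fun σ _ => ?_
        rw [Finset.sum_comm]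
        refine Finset.sum_congr rfl fun τ _ => ?_
        rw [Finset.mul_sum]
    _ = 0 := by
        simp only [key, mul_zero, Finset.sum_const_zero]

private lemma Q_eq_of_inj {n k : ℕ} (lam : Fin n → F) (w : Fin n → F)
    (g : Fin k → Fin n) (hg : Function.Injective g) :
    (∏ a, w (g a)) * ∏ a : Fin k, ∏ b ∈ ({a}ᶜ : Finset (Fin k)), (lam (g a) - lam (g b)) =
    (∏ i ∈ image g univ, w i) *
      ∏ i ∈ image g univ, ∏ j ∈ (image g univ).erase i, (lam i - lam j) := by
  congr 1
  · rw [Finset.prod_image (fun x _ y _ h => hg h)]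
  · rw [Finset.prod_image (fun x _ y _ h => hg h)]
    refine Finset.prod_congr rfl fun a _ => ?_
    rw [← Finset.image_erase hg univ a, Finset.prod_image
      (fun x _ y _ h => hg h), compl_singleton]

private lemma image_emb_perm {n k : ℕ} (S : Finset (Fin n)) (hS : S.card = k)
    (σ : Equiv.Perm (Fin k)) :
    image (fun a => ((S.orderIsoOfFin hS) (σ a) : Fin n)) univ = S := by
  apply Finset.eq_of_subset_of_card_le
  · intro x hx
    simp only [Finset.mem_image] at hx
    obtain ⟨a, _, rfl⟩ := hx
    exact (S.orderIsoOfFin hS (σ a)).2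
  · rw [Finset.card_image_of_injective _ (fun x y h => by
      simpa using σ.injective ((S.orderIsoOfFin hS).injective (Subtype.ext h)))]
    simp [hS]

private noncomputable def sigmaEquivFwd {n k : ℕ}
    (x : {s : Finset (Fin n) // s.card = k} × Equiv.Perm (Fin k)) :
    {g : Fin k → Fin n // Function.Injective g} :=
  ⟨fun a => ((x.1.1.orderIsoOfFin x.1.2) (x.2 a) : Fin n),
   fun a b h => x.2.injective ((x.1.1.orderIsoOfFin x.1.2).injective (Subtype.ext h))⟩

private lemma sigmaEquivFwd_bijective {n k : ℕ} :
    Function.Bijective (sigmaEquivFwd (n := n) (k := k)) := by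
  constructor
  · rintro ⟨⟨S, hS⟩, σ⟩ ⟨⟨T, hT⟩, τ⟩ h
    have hfun := congrArg Subtype.val h
    simp only [sigmaEquivFwd] at hfun
    have hST : S = T := by
      rw [← image_emb_perm S hS σ, ← image_emb_perm T hT τ, hfun]
    subst hST
    have hστ : σ = τ := by
      ext a
      have := congrFun hfun a
      have h2 : σ a = τ a := (S.orderIsoOfFin hS).injective (Subtype.ext this)
      exact congrArg Fin.val h2
    subst hστ
    rfl
  · rintro ⟨g, hg⟩
    have hcard : (image g univ).card = k := by
      rw [Finset.card_image_of_injective _ hg, card_univ, Fintype.card_fin]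
    set E := (image g univ).orderIsoOfFin hcard with hE
    have hmem : ∀ a, g a ∈ image g univ := fun a => mem_image_of_mem g (mem_univ a)
    set σ0 : Fin k → Fin k := fun a => E.symm ⟨g a, hmem a⟩ with hσ0
    have hσinj : Function.Injective σ0 := by
      intro a b hab
      have : (⟨g a, hmem a⟩ : {x // x ∈ image g univ}) = ⟨g b, hmem b⟩ :=
        E.symm.injective hab
      exact hg (congrArg Subtype.val this)
    refine ⟨⟨⟨image g univ, hcard⟩,
      Equiv.ofBijective σ0 (Finite.injective_iff_bijective.mp hσinj)⟩, ?_⟩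
    apply Subtype.ext
    funext a
    show ((E (σ0 a) : Fin n)) = g a
    rw [hσ0]
    simp

private lemma pair_prod {k : ℕ} (v : Fin k → F) :
    (∏ a : Fin k, ∏ b ∈ ({a}ᶜ : Finset (Fin k)), (v a - v b)) =
    (∏ a : Fin k, ∏ b ∈ Ioi a, (-1 : F)) *
      ((∏ a : Fin k, ∏ b ∈ Ioi a, (v b - v a)) *
       (∏ a : Fin k, ∏ b ∈ Ioi a, (v b - v a))) := by
  have h := Finset.prod_prod_Ioi_mul_eq_prod_prod_off_diag (fun x y : Fin k => v y - v x)
  simp only [compl_singleton] at h ⊢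
  calc (∏ a : Fin k, ∏ b ∈ univ.erase a, (v a - v b))
      = ∏ a : Fin k, ∏ b ∈ Ioi a, ((v a - v b) * (v b - v a)) := by
        convert h.symm using 2
    _ = ∏ a : Fin k, ∏ b ∈ Ioi a, ((-1 : F) * ((v b - v a) * (v b - v a))) :=
        Finset.prod_congr rfl fun a _ => Finset.prod_congr rfl fun b _ => by ring
    _ = _ := by simp only [Finset.prod_mul_distrib]

end Aux

theorem sum_one_div_prod_eq_zero {F : Type*} [Field F] [CharZero F]
    (n k : ℕ) (hk0 : 0 < k) (hk : k < n)
    (lam : Fin n → F) (hlam : Function.Injective lam) :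
    ∑ I : {s : Finset (Fin n) // s.card = k},
        1 / ∏ i ∈ I.1, ∏ j ∈ I.1ᶜ, (lam i - lam j) = 0 := by
  classical
  set w : Fin n → F := fun i => ∏ j ∈ univ.erase i, (lam i - lam j)⁻¹ with hwdef
  set Q : (Fin k → Fin n) → F := fun g =>
    (∏ a, w (g a)) *
      ∏ a : Fin k, ∏ b ∈ ({a}ᶜ : Finset (Fin k)), (lam (g a) - lam (g b)) with hQdef
  set H : Finset (Fin n) → F := fun S =>
    (∏ i ∈ S, w i) * ∏ i ∈ S, ∏ j ∈ S.erase i, (lam i - lam j) with hHdef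
  -- Step 1: the sum of all Q g is zero
  have hQsum : ∑ g : Fin k → Fin n, Q g = 0 := by
    have h0 := fn_sum_zero hk0 hk lam w (fun m hm => lag_pow_sum lam hlam m hm)
    calc ∑ g : Fin k → Fin n, Q g
        = (∏ a : Fin k, ∏ b ∈ Ioi a, (-1 : F)) *
            ∑ g : Fin k → Fin n,
              (∏ a, w (g a)) * ((∏ a : Fin k, ∏ b ∈ Ioi a, (lam (g b) - lam (g a))) *
                (∏ a : Fin k, ∏ b ∈ Ioi a, (lam (g b) - lam (g a)))) := by
          rw [Finset.mul_sum]
          refine Finset.sum_congr rfl fun g _ => ?_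
          rw [hQdef]
          simp only
          rw [pair_prod (fun a => lam (g a))]
          ring
      _ = 0 := by rw [h0, mul_zero]
  -- Step 2: Q vanishes on non-injective functions
  have hQzero : ∀ g : Fin k → Fin n, ¬ Function.Injective g → Q g = 0 := by
    intro g hg
    simp only [Function.Injective, not_forall] at hg
    obtain ⟨a, b, hab, hne⟩ := hg
    apply mul_eq_zero_of_right
    apply Finset.prod_eq_zero (Finset.mem_univ a)
    apply Finset.prod_eq_zero (show b ∈ ({a}ᶜ : Finset (Fin k)) by
      simp [Finset.mem_compl, Ne.symm hne])
    rw [hab, sub_self]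
  -- Step 3: sum over injective functions equals k! times sum over subsets
  have hfilter : ∑ g ∈ univ.filter (fun g : Fin k → Fin n => Function.Injective g), Q g
      = ∑ g : Fin k → Fin n, Q g :=
    Finset.sum_filter_of_ne (fun g _ hQg => by
      by_contra hni; exact hQg (hQzero g hni))
  have hsub : ∑ g ∈ univ.filter (fun g : Fin k → Fin n => Function.Injective g), Q g
      = ∑ g : {g : Fin k → Fin n // Function.Injective g}, Q g.1 :=
    Finset.sum_subtype _ (fun g => by simp) _
  have hbij : ∑ x : {s : Finset (Fin n) // s.card = k} × Equiv.Perm (Fin k),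
      Q (sigmaEquivFwd x).1 = ∑ g : {g : Fin k → Fin n // Function.Injective g}, Q g.1 :=
    Fintype.sum_bijective sigmaEquivFwd sigmaEquivFwd_bijective _ _ (fun x => rfl)
  have hterm : ∀ x : {s : Finset (Fin n) // s.card = k} × Equiv.Perm (Fin k),
      Q (sigmaEquivFwd x).1 = H x.1.1 := by
    rintro ⟨⟨S, hS⟩, σ⟩
    have himg := image_emb_perm S hS σ
    rw [hQdef, hHdef]
    simp only
    rw [Q_eq_of_inj lam w _ (sigmaEquivFwd (⟨⟨S, hS⟩, σ⟩ :
      {s : Finset (Fin n) // s.card = k} × Equiv.Perm (Fin k))).2]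
    have himg2 : image (Subtype.val (sigmaEquivFwd (⟨⟨S, hS⟩, σ⟩ :
        {s : Finset (Fin n) // s.card = k} × Equiv.Perm (Fin k)))) univ = S := himg
    rw [himg2]
  have hcount : ∑ x : {s : Finset (Fin n) // s.card = k} × Equiv.Perm (Fin k),
      Q (sigmaEquivFwd x).1
      = (k.factorial : F) * ∑ S : {s : Finset (Fin n) // s.card = k}, H S.1 := by
    rw [Fintype.sum_prod_type]
    rw [Finset.mul_sum]
    refine Finset.sum_congr rfl fun S _ => ?_
    calc ∑ σ : Equiv.Perm (Fin k), Q ↑(sigmaEquivFwd (S, σ))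
        = ∑ _σ : Equiv.Perm (Fin k), H ↑S := Finset.sum_congr rfl fun σ _ => hterm (S, σ)
      _ = _ := by
        rw [Finset.sum_const, card_univ, Fintype.card_perm, Fintype.card_fin, nsmul_eq_mul]
  have hHsum : ∑ S : {s : Finset (Fin n) // s.card = k}, H S.1 = 0 := by
    have : (k.factorial : F) * ∑ S : {s : Finset (Fin n) // s.card = k}, H S.1 = 0 := by
      rw [← hcount, hbij, ← hsub, hfilter, hQsum]
    exact (mul_eq_zero.mp this).resolve_left
      (Nat.cast_ne_zero.mpr k.factorial_ne_zero)
  -- Step 4: each original term equals H S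
  rw [← hHsum]
  refine Finset.sum_congr rfl fun ⟨S, hS⟩ _ => ?_
  simp only [hHdef]
  rw [one_div, ← Finset.prod_inv_distrib, ← Finset.prod_mul_distrib]
  refine Finset.prod_congr rfl fun i hi => ?_
  have hne : ∀ j ∈ S.erase i, lam i - lam j ≠ 0 := fun j hj =>
    sub_ne_zero_of_ne (fun h => (Finset.mem_erase.mp hj).1 (hlam h).symm)
  have hpne : (∏ j ∈ S.erase i, (lam i - lam j)) ≠ 0 :=
    Finset.prod_ne_zero_iff.mpr hne
  have hunion : (S.erase i) ∪ Sᶜ = univ.erase i := by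
    ext j
    simp only [Finset.mem_union, Finset.mem_erase, Finset.mem_compl, Finset.mem_univ,
      and_true]
    constructor
    · rintro (⟨hne2, _⟩ | hnotin)
      · exact hne2
      · exact fun h => hnotin (by rw [h]; exact hi)
    · intro hne2
      by_cases hj : j ∈ S
      · exact Or.inl ⟨hne2, hj⟩
      · exact Or.inr hj
  have hdisj : Disjoint (S.erase i) Sᶜ :=
    Finset.disjoint_left.mpr fun j hj hjc =>
      (Finset.mem_compl.mp hjc) (Finset.mem_of_mem_erase hj)
  have h1 : (∏ j ∈ univ.erase i, (lam i - lam j))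
      = (∏ j ∈ S.erase i, (lam i - lam j)) * ∏ j ∈ Sᶜ, (lam i - lam j) := by
    rw [← hunion, Finset.prod_union hdisj]
  calc (∏ j ∈ Sᶜ, (lam i - lam j))⁻¹
      = (∏ j ∈ univ.erase i, (lam i - lam j))⁻¹ * ∏ j ∈ S.erase i, (lam i - lam j) := by
        rw [h1, mul_inv, mul_right_comm, inv_mul_cancel₀ hpne, one_mul]
    _ = (∏ j ∈ univ.erase i, (lam i - lam j)⁻¹) * ∏ j ∈ S.erase i, (lam i - lam j) := by
        rw [← Finset.prod_inv_distrib]
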